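/- Let Φ : ℂ → Matrix (Fin 2) (Fin 2) ℂ and f : ℂ → ℂ be differentiable at a point λ ∈ ℂ, and suppose that f(z)²·det Φ(z) = 1 for all z in some neighborhood of λ (in particular det Φ(λ) ≠ 0 and f(λ) ≠ 0). Set Ψ(z) = f(z)·Φ(z). Then Ψ(λ) is invertible and (1/2)·tr((Ψ'(λ)·Ψ(λ)⁻¹)²) = −det(Φ'(λ))/det(Φ(λ)) + (1/4)·( (d/dz det Φ(z))|_{z=λ} / det Φ(λ) )², where Ψ'(λ) and Φ'(λ) denote the complex derivatives at λ. -/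

import Mathlib

attribute [local instance] Matrix.normedAddCommGroup Matrix.normedSpace

open Filter Topology

private lemma aux_entry {Φ : ℂ → Matrix (Fin 2) (Fin 2) ℂ} {A' : Matrix (Fin 2) (Fin 2) ℂ}
    {lam : ℂ} (h : HasDerivAt Φ A' lam) (i j : Fin 2) :
    HasDerivAt (fun z => Φ z i j) (A' i j) lam := by
  have h1 : HasDerivAt (fun z => Φ z i) (A' i) lam :=
    (ContinuousLinearMap.proj (R := ℂ) (φ := fun _ : Fin 2 => Fin 2 → ℂ)
      i).hasFDerivAt.comp_hasDerivAt lam h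
  exact (ContinuousLinearMap.proj (R := ℂ) (φ := fun _ : Fin 2 => ℂ)
      j).hasFDerivAt.comp_hasDerivAt lam h1

private lemma aux_det {Φ : ℂ → Matrix (Fin 2) (Fin 2) ℂ} {A' : Matrix (Fin 2) (Fin 2) ℂ}
    {lam : ℂ} (h : HasDerivAt Φ A' lam) :
    HasDerivAt (fun z => (Φ z).det)
      (A' 0 0 * Φ lam 1 1 + Φ lam 0 0 * A' 1 1 -
        (A' 0 1 * Φ lam 1 0 + Φ lam 0 1 * A' 1 0)) lam := by
  have := ((aux_entry h 0 0).fun_mul (aux_entry h 1 1)).fun_sub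
    ((aux_entry h 0 1).fun_mul (aux_entry h 1 0))
  simpa [Matrix.det_fin_two] using this

/-- If `Ψ = f·Φ` is the scalar normalization of a 2×2 matrix function `Φ` with
`f²·det Φ ≡ 1` near `λ`, then `Ψ(λ)` is invertible and
`(1/2)tr((Ψ'Ψ^{−1})²) = −det(Φ')/det Φ + (1/4)((det Φ)'/det Φ)²` at `λ`. -/
theorem normalized_trace_square_formula
    (Φ : ℂ → Matrix (Fin 2) (Fin 2) ℂ) (f : ℂ → ℂ) (lam : ℂ)
    (hΦ : DifferentiableAt ℂ Φ lam) (hf : DifferentiableAt ℂ f lam)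
    (hdet : ∀ᶠ z in 𝓝 lam, f z ^ 2 * (Φ z).det = 1)
    (Ψ : ℂ → Matrix (Fin 2) (Fin 2) ℂ) (hΨ : ∀ z, Ψ z = f z • Φ z) :
    IsUnit (Ψ lam) ∧
    (1 / 2 : ℂ) * ((deriv Ψ lam * (Ψ lam)⁻¹) ^ 2).trace =
      -(deriv Φ lam).det / (Φ lam).det +
        (1 / 4 : ℂ) * (deriv (fun z => (Φ z).det) lam / (Φ lam).det) ^ 2 := by
  have hA := hΦ.hasDerivAt
  have h1 : f lam ^ 2 * (Φ lam).det = 1 := hdet.self_of_nhds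
  have hd0 : (Φ lam).det ≠ 0 := by
    intro h; rw [h, mul_zero] at h1; exact one_ne_zero h1.symm
  have hk0 : f lam ≠ 0 := by
    intro h; rw [h] at h1; simp at h1
  have hdetΨ : (Ψ lam).det = 1 := by
    rw [hΨ, Matrix.det_smul]
    simpa using h1
  set D : ℂ := deriv Φ lam 0 0 * Φ lam 1 1 + Φ lam 0 0 * deriv Φ lam 1 1 -
      (deriv Φ lam 0 1 * Φ lam 1 0 + Φ lam 0 1 * deriv Φ lam 1 0) with hDdef
  have hD : HasDerivAt (fun z => (Φ z).det) D lam := aux_det hA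
  have hDeq : deriv (fun z => (Φ z).det) lam = D := hD.deriv
  have hg : HasDerivAt (fun z => f z ^ 2 * (Φ z).det)
      (2 * f lam ^ 1 * deriv f lam * (Φ lam).det + f lam ^ 2 * D) lam := by
    simpa using (hf.hasDerivAt.fun_pow 2).fun_mul hD
  have hzero : 2 * f lam ^ 1 * deriv f lam * (Φ lam).det + f lam ^ 2 * D = 0 := by
    have hc : HasDerivAt (fun _ : ℂ => (1 : ℂ))
        (2 * f lam ^ 1 * deriv f lam * (Φ lam).det + f lam ^ 2 * D) lam :=
      hg.congr_of_eventuallyEq (Filter.EventuallyEq.symm hdet)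
    exact hc.unique (hasDerivAt_const lam 1)
  have hΨ' : deriv Ψ lam = f lam • deriv Φ lam + deriv f lam • Φ lam := by
    have hΨf : Ψ = fun y => f y • Φ y := funext hΨ
    rw [hΨf]
    exact deriv_smul hf hΦ
  have hinv : (Ψ lam)⁻¹ = (Ψ lam).adjugate := by
    rw [Matrix.inv_def, hdetΨ, Ring.inverse_one, one_smul]
  refine ⟨(Matrix.isUnit_iff_isUnit_det _).2 (hdetΨ ▸ isUnit_one), ?_⟩
  rw [hΨ', hinv, hΨ lam, hDeq]
  simp only [Matrix.adjugate_fin_two, Matrix.trace_fin_two, pow_two, Matrix.mul_apply,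
    Fin.sum_univ_two, Matrix.smul_apply, Matrix.add_apply, smul_eq_mul,
    Matrix.cons_val', Matrix.cons_val_zero, Matrix.cons_val_one, Matrix.head_cons,
    Matrix.head_fin_const, Matrix.empty_val', Matrix.cons_val_fin_one,
    Matrix.det_fin_two, Matrix.of_apply]
  rw [Matrix.det_fin_two] at h1 hd0
  rw [hDdef] at hzero
  rw [Matrix.det_fin_two] at hzero
  rw [hDdef]
  field_simp
  linear_combination
    ((2 * (deriv Φ lam 0 0 * Φ lam 1 1 + Φ lam 0 0 * deriv Φ lam 1 1 - (deriv Φ lam 0 1 * Φ lam 1 0 + Φ lam 0 1 * deriv Φ lam 1 0)) ^ 2 - 8 * (deriv Φ lam 0 0 * deriv Φ lam 1 1 - deriv Φ lam 0 1 * deriv Φ lam 1 0) * (Φ lam 0 0 * Φ lam 1 1 - Φ lam 0 1 * Φ lam 1 0)) * ((f lam) ^ 2 * (Φ lam 0 0 * Φ lam 1 1 - Φ lam 0 1 * Φ lam 1 0) + 1)) * h1 +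
    (2 * (Φ lam 0 0 * Φ lam 1 1 - Φ lam 0 1 * Φ lam 1 0) ^ 2 * (2 * (f lam) * (deriv f lam) * (Φ lam 0 0 * Φ lam 1 1 - Φ lam 0 1 * Φ lam 1 0) + (f lam) ^ 2 * (deriv Φ lam 0 0 * Φ lam 1 1 + Φ lam 0 0 * deriv Φ lam 1 1 - (deriv Φ lam 0 1 * Φ lam 1 0 + Φ lam 0 1 * deriv Φ lam 1 0)))) * hzero
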